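/- Let V be a finite set, r ∈ V, and par : V → V a parent function with par(r) = r, par(v) ≠ v for v ≠ r, and such that every v reaches r by iterating par; say u is an ancestor of v if u = par^[n](v) for some n ≥ 0. Let w : V → ℕ assign a positive weight to every vertex, and let W(v) be the sum of w(u) over all u having v as an ancestor. Fix two vertices s₁, s₂ ∈ V. Call a non-root vertex c with parent p = par(c) heavy if: c is an ancestor of s₁; or c is an ancestor of s₂ and p is not an ancestor of s₁; or p is an ancestor of neither s₁ nor s₂ and W(p) < 2·W(c). Call c light otherwise. Then for every vertex v, the number of light vertices among v, par(v), par(par(v)), …, excluding the root r, is at most ⌊log₂(W(r) / W(v))⌋ + 2. -/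

import Mathlib

/-- `u` is an ancestor of `v` (including `u = v`) if `u` is obtained from `v` by
iterating the parent function finitely many times. -/
def Ancestor {V : Type*} (par : V → V) (u v : V) : Prop :=
  ∃ n : ℕ, par^[n] v = u

open scoped Classical in
/-- `Wt par w v` is the sum of `w u` over all `u` having `v` as an ancestor
(the weight of the subtree rooted at `v`). -/
noncomputable def Wt {V : Type*} [Fintype V] (par : V → V) (w : V → ℕ) (v : V) : ℕ :=
  ∑ u : V, if Ancestor par v u then w u else 0

/-- A non-root vertex `c` with parent `p = par c` is *heavy* (for the selected vertices
`s₁` and `s₂`) if: `c` is an ancestor of `s₁`; or `c` is an ancestor of `s₂` and `p` is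
not an ancestor of `s₁`; or `p` is an ancestor of neither `s₁` nor `s₂` and
`W(p) < 2·W(c)`. -/
noncomputable def Heavy {V : Type*} [Fintype V] (par : V → V) (w : V → ℕ)
    (s₁ s₂ c : V) : Prop :=
  Ancestor par c s₁ ∨
  (Ancestor par c s₂ ∧ ¬ Ancestor par (par c) s₁) ∨
  (¬ Ancestor par (par c) s₁ ∧ ¬ Ancestor par (par c) s₂ ∧
    Wt par w (par c) < 2 * Wt par w c)

lemma anc_par' {V : Type*} {par : V → V} {u x : V} (h : Ancestor par u x) :
    Ancestor par (par u) x := by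
  obtain ⟨k, hk⟩ := h
  exact ⟨k + 1, by rw [Function.iterate_succ_apply', hk]⟩

lemma wt_le_wt_par' {V : Type*} [Fintype V] (par : V → V) (w : V → ℕ) (u : V) :
    Wt par w u ≤ Wt par w (par u) := by
  classical
  unfold Wt
  refine Finset.sum_le_sum fun i _ => ?_
  by_cases h : Ancestor par u i
  · simp [h, anc_par' h]
  · simp [h]

lemma one_le_wt' {V : Type*} [Fintype V] (par : V → V) (w : V → ℕ)
    (hw : ∀ v : V, 1 ≤ w v) (u : V) : 1 ≤ Wt par w u := by
  classical
  unfold Wt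
  calc 1 ≤ w u := hw u
    _ = if Ancestor par u u then w u else 0 := by rw [if_pos ⟨0, rfl⟩]
    _ ≤ _ := Finset.single_le_sum (f := fun x => if Ancestor par u x then w x else 0)
        (fun i _ => Nat.zero_le _) (Finset.mem_univ u)

/-- In a rooted tree with positive weights and two selected vertices `s₁`, `s₂`, for
every vertex `v` the number of light vertices among `v, par v, par (par v), …`,
excluding the root `r`, is at most `⌊log₂(W(r) / W(v))⌋ + 2`. -/
theorem light_depth_bound {V : Type*} [Fintype V] (r : V) (par : V → V)
    (hroot : par r = r) (hnr : ∀ v : V, v ≠ r → par v ≠ v)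
    (hreach : ∀ v : V, ∃ n : ℕ, par^[n] v = r)
    (w : V → ℕ) (hw : ∀ v : V, 1 ≤ w v) (s₁ s₂ : V) (v : V) :
    {u : V | Ancestor par u v ∧ u ≠ r ∧ ¬ Heavy par w s₁ s₂ u}.ncard ≤
      Nat.log 2 (Wt par w r / Wt par w v) + 2 := by
  classical
  obtain ⟨N, hN, hNmin⟩ : ∃ N : ℕ, par^[N] v = r ∧ ∀ m < N, par^[m] v ≠ r :=
    ⟨Nat.find (hreach v), Nat.find_spec (hreach v), fun m hm => Nat.find_min (hreach v) hm⟩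
  set f : ℕ → V := fun n => par^[n] v with hf
  have hfsucc : ∀ n, f (n + 1) = par (f n) := fun n => Function.iterate_succ_apply' par n v
  have hmono : ∀ (s : V) (i j : ℕ), i ≤ j → Ancestor par (f i) s → Ancestor par (f j) s := by
    intro s i j hij h
    induction j, hij using Nat.le_induction with
    | base => exact h
    | succ n hn ih => rw [hfsucc]; exact anc_par' ih
  set PA : ℕ → Prop := fun n => ¬ Ancestor par (par (f n)) s₁ ∧ ¬ Ancestor par (par (f n)) s₂ ∧
      2 * Wt par w (f n) ≤ Wt par w (par (f n)) with hPA
  set A := (Finset.range N).filter PA with hA'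
  set B := (Finset.range N).filter
      (fun n => Ancestor par (par (f n)) s₁ ∧ ¬ Ancestor par (f n) s₁) with hB'
  set C := (Finset.range N).filter
      (fun n => Ancestor par (par (f n)) s₂ ∧ ¬ Ancestor par (f n) s₂) with hC'
  set T := (Finset.range N).filter (fun n => ¬ Heavy par w s₁ s₂ (f n)) with hT'
  -- the light set is contained in the image of T under f
  have hsub : {u : V | Ancestor par u v ∧ u ≠ r ∧ ¬ Heavy par w s₁ s₂ u} ⊆ ↑(T.image f) := by
    rintro u ⟨⟨n, hn⟩, hur, hl⟩
    have hnN : n < N := by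
      by_contra hc
      push_neg at hc
      have hfr : f n = r := by
        have h1 : n - N + N = n := Nat.sub_add_cancel hc
        calc f n = par^[n - N + N] v := by rw [h1]
          _ = par^[n - N] (par^[N] v) := Function.iterate_add_apply par _ _ v
          _ = r := by rw [hN]; exact Function.iterate_fixed hroot _
      exact hur (hn ▸ hfr)
    exact Finset.mem_coe.2 (Finset.mem_image.2
      ⟨n, Finset.mem_filter.2 ⟨Finset.mem_range.2 hnN, by rw [show f n = u from hn]; exact hl⟩, hn⟩)
  have hcard1 : {u : V | Ancestor par u v ∧ u ≠ r ∧ ¬ Heavy par w s₁ s₂ u}.ncard ≤ T.card := by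
    have h1 := Set.ncard_le_ncard hsub (Finset.finite_toSet _)
    rw [Set.ncard_coe_finset] at h1
    exact h1.trans Finset.card_image_le
  -- T ⊆ A ∪ B ∪ C
  have hT : T ⊆ A ∪ B ∪ C := by
    intro n hn
    obtain ⟨hnr', hl⟩ := Finset.mem_filter.1 hn
    simp only [Finset.mem_union, Finset.mem_filter, hA', hB', hC']
    by_cases h1 : Ancestor par (par (f n)) s₁
    · exact Or.inl (Or.inr ⟨hnr', h1, fun hc => hl (Or.inl hc)⟩)
    · by_cases h2 : Ancestor par (par (f n)) s₂
      · exact Or.inr ⟨hnr', h2, fun hc => hl (Or.inr (Or.inl ⟨hc, h1⟩))⟩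
      · refine Or.inl (Or.inl ⟨hnr', h1, h2, ?_⟩)
        by_contra hlt
        push_neg at hlt
        exact hl (Or.inr (Or.inr ⟨h1, h2, hlt⟩))
  -- |B| ≤ 1
  have hB : B.card ≤ 1 := by
    refine Finset.card_le_one.2 fun a ha b hb => ?_
    obtain ⟨-, ha1, ha2⟩ := Finset.mem_filter.1 ha
    obtain ⟨-, hb1, hb2⟩ := Finset.mem_filter.1 hb
    rw [← hfsucc] at ha1 hb1
    by_contra hne
    rcases Nat.lt_or_ge a b with h | h
    · exact hb2 (hmono s₁ (a + 1) b h ha1)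
    · exact ha2 (hmono s₁ (b + 1) a (lt_of_le_of_ne h (Ne.symm hne)) hb1)
  have hC : C.card ≤ 1 := by
    refine Finset.card_le_one.2 fun a ha b hb => ?_
    obtain ⟨-, ha1, ha2⟩ := Finset.mem_filter.1 ha
    obtain ⟨-, hb1, hb2⟩ := Finset.mem_filter.1 hb
    rw [← hfsucc] at ha1 hb1
    by_contra hne
    rcases Nat.lt_or_ge a b with h | h
    · exact hb2 (hmono s₂ (a + 1) b h ha1)
    · exact ha2 (hmono s₂ (b + 1) a (lt_of_le_of_ne h (Ne.symm hne)) hb1)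
  -- the weight doubles along A
  have key : ∀ n, n ≤ N →
      2 ^ (((Finset.range n).filter PA).card) * Wt par w v ≤ Wt par w (f n) := by
    intro n hn
    induction n with
    | zero => simp [f]
    | succ m ih =>
      have ihm := ih (le_trans (Nat.le_succ m) hn)
      rw [Finset.range_add_one, Finset.filter_insert]
      by_cases hpa : PA m
      · rw [if_pos hpa, Finset.card_insert_of_notMem (by simp)]
        rw [hfsucc]
        calc 2 ^ (((Finset.range m).filter PA).card + 1) * Wt par w v
            = 2 * (2 ^ ((Finset.range m).filter PA).card * Wt par w v) := by ring
          _ ≤ 2 * Wt par w (f m) := Nat.mul_le_mul_left 2 ihm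
          _ ≤ Wt par w (par (f m)) := hpa.2.2
      · rw [if_neg hpa]
        rw [hfsucc]
        exact ihm.trans (wt_le_wt_par' par w (f m))
  have hAcard : A.card ≤ Nat.log 2 (Wt par w r / Wt par w v) := by
    have h2 := key N le_rfl
    rw [show f N = r from hN] at h2
    have hv1 : 0 < Wt par w v := one_le_wt' par w hw v
    have hdiv : 2 ^ A.card ≤ Wt par w r / Wt par w v := (Nat.le_div_iff_mul_le hv1).2 h2
    have hne : Wt par w r / Wt par w v ≠ 0 := by
      have : 1 ≤ 2 ^ A.card := Nat.one_le_two_pow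
      omega
    exact (Nat.le_log_iff_pow_le one_lt_two hne).2 hdiv
  have := Finset.card_le_card hT
  have h3 : (A ∪ B ∪ C).card ≤ A.card + B.card + C.card :=
    (Finset.card_union_le _ _).trans (by
      have := Finset.card_union_le A B
      omega)
  omega
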